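/- Let $\mathfrak{p}$ be a partition of an odd number $N$. Form the sequence of all even parts of $\mathfrak{p}$ (appending a $0$ if needed to make the count even), arranged decreasingly as $(p_1^*, \ldots, p_{2m}^*)$, apply operation $(\star)$ (replace each pair with $p_{2j-1}^* > p_{2j}^*$ by $(p_{2j-1}^*-1, p_{2j}^*+1)$), and recombine the resulting parts with the odd parts of $\mathfrak{p}$, discarding zeros. Then the result is a partition of $N$ in which every even part occurs with even multiplicity (i.e., the result is the Jordan type of a nilpotent orbit of type $B$). -/

import Mathlib

/-- The operation `(⋆)`: in a sequence read as consecutive pairs, every strictly decreasing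
pair `(a, b)` with `a > b` is replaced by `(a - 1, b + 1)`; all other entries are unchanged. -/
def starOp : List ℕ → List ℕ
  | a :: b :: rest => if b < a then (a - 1) :: (b + 1) :: starOp rest
                      else a :: b :: starOp rest
  | l => l

/-- The parts of a multiset listed in non-increasing order. -/
def descSort (s : Multiset ℕ) : List ℕ :=
  (Multiset.sort s (· ≤ ·)).reverse

/-- The even parts of `𝔭`, listed decreasingly, with a `0` appended if needed to make the
number of entries even. -/
def evenSeq (p : Multiset ℕ) : List ℕ :=
  let l := descSort (p.filter (fun x => x % 2 = 0))
  if l.length % 2 = 0 then l else l ++ [0]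

/-- The `B`-collapse algorithm: apply `(⋆)` to the (zero-padded) decreasing sequence of even
parts of `𝔭`, recombine with the odd parts, and discard zeros. -/
def bCollapse (p : Multiset ℕ) : Multiset ℕ :=
  ((starOp (evenSeq p) : List ℕ) : Multiset ℕ).filter (fun x => 0 < x)
    + p.filter (fun x => x % 2 = 1)


lemma starOp_sum (l : List ℕ) : (starOp l).sum = l.sum := by
  induction l using starOp.induct with
  | case1 a b rest h ih => simp [starOp, h, ih]; omega
  | case2 a b rest h ih => simp [starOp, h, ih]
  | case3 l h =>
    match l, h with
    | [], _ => rfl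
    | [a], _ => rfl
    | a :: b :: r, h => exact (h a b r rfl).elim

lemma count_starOp_even (l : List ℕ) (hl : l.Pairwise (· ≥ ·))
    (he : ∀ x ∈ l, x % 2 = 0) (hlen : l.length % 2 = 0)
    (x : ℕ) (hx : x % 2 = 0) : (starOp l).count x % 2 = 0 := by
  induction l using starOp.induct with
  | case1 a b rest h ih =>
    rw [List.pairwise_cons] at hl
    obtain ⟨h1, hl⟩ := hl
    rw [List.pairwise_cons] at hl
    obtain ⟨h2, hl⟩ := hl
    have ha : a % 2 = 0 := he a (by simp)
    have hb : b % 2 = 0 := he b (by simp)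
    have ihh := ih hl (fun y hy => he y (by simp [hy]))
      (by simp only [List.length_cons] at hlen; omega)
    simp only [starOp, if_pos h, List.count_cons]
    have h3 : a - 1 ≠ x := by omega
    have h4 : b + 1 ≠ x := by omega
    simp [h3, h4, ihh]
  | case2 a b rest h ih =>
    rw [List.pairwise_cons] at hl
    obtain ⟨h1, hl⟩ := hl
    rw [List.pairwise_cons] at hl
    obtain ⟨h2, hl⟩ := hl
    have hab : a = b := le_antisymm (by omega) (h1 b (by simp))
    have ihh := ih hl (fun y hy => he y (by simp [hy]))
      (by simp only [List.length_cons] at hlen; omega)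
    simp only [starOp, if_neg h, List.count_cons, hab]
    rcases eq_or_ne b x with rfl | hxb
    · simp; omega
    · simp [List.count_cons, hxb, ihh]
  | case3 l h =>
    match l, h with
    | [], _ => rfl
    | [a], _ => simp at hlen
    | a :: b :: r, h => exact (h a b r rfl).elim

lemma descSort_sorted (s : Multiset ℕ) : (descSort s).Pairwise (· ≥ ·) := by
  unfold descSort
  rw [List.pairwise_reverse]
  exact Multiset.pairwise_sort (s := s) (r := (· ≤ ·))

lemma descSort_mem {s : Multiset ℕ} {x : ℕ} (h : x ∈ descSort s) : x ∈ s := by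
  unfold descSort at h
  rw [List.mem_reverse] at h
  exact (Multiset.mem_sort (r := (· ≤ ·))).1 h

lemma descSort_sum (s : Multiset ℕ) : (descSort s).sum = s.sum := by
  unfold descSort
  rw [List.sum_reverse]
  conv_rhs => rw [← Multiset.sort_eq (s := s) (r := (· ≤ ·))]
  rfl

lemma evenSeq_sorted (p : Multiset ℕ) : (evenSeq p).Pairwise (· ≥ ·) := by
  unfold evenSeq
  dsimp only
  split
  · exact descSort_sorted _
  · rw [List.pairwise_append]
    refine ⟨descSort_sorted _, by simp, by simp⟩

lemma evenSeq_even (p : Multiset ℕ) : ∀ x ∈ evenSeq p, x % 2 = 0 := by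
  intro x hx
  unfold evenSeq at hx
  dsimp only at hx
  split at hx
  · exact (Multiset.mem_filter.1 (descSort_mem hx)).2
  · rw [List.mem_append] at hx
    rcases hx with hx | hx
    · exact (Multiset.mem_filter.1 (descSort_mem hx)).2
    · simp at hx; simp [hx]

lemma evenSeq_length (p : Multiset ℕ) : (evenSeq p).length % 2 = 0 := by
  unfold evenSeq
  dsimp only
  split <;> simp_all <;> omega

lemma evenSeq_sum (p : Multiset ℕ) :
    (evenSeq p).sum = (p.filter (fun x => x % 2 = 0)).sum := by
  unfold evenSeq
  dsimp only
  split <;> simp [descSort_sum]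

lemma sum_filter_pos (s : Multiset ℕ) : (s.filter (fun x => 0 < x)).sum = s.sum := by
  conv_rhs => rw [← Multiset.filter_add_not (fun x => 0 < x) s]
  rw [Multiset.sum_add]
  have : (s.filter (fun x => ¬ 0 < x)).sum = 0 := by
    apply Multiset.sum_eq_zero
    intro x hx
    have := (Multiset.mem_filter.1 hx).2
    omega
  omega

/-- For a partition `𝔭` of an odd number `N`, the result of the `B`-collapse algorithm is a
partition of `N` in which every even part occurs with even multiplicity (i.e. it is the Jordan
type of a nilpotent orbit of type `B`). -/
theorem stmt8 (N : ℕ) (hN : Odd N) (p : Multiset ℕ)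
    (hpos : ∀ x ∈ p, 0 < x) (hsum : p.sum = N) :
    (bCollapse p).sum = N ∧
    (∀ x ∈ bCollapse p, 0 < x) ∧
    (∀ x ∈ bCollapse p, Even x → Even ((bCollapse p).count x)) := by
  refine ⟨?_, ?_, ?_⟩
  · rw [bCollapse, Multiset.sum_add, sum_filter_pos]
    have h1 : ((starOp (evenSeq p) : List ℕ) : Multiset ℕ).sum = (evenSeq p).sum := by
      rw [Multiset.sum_coe, starOp_sum]
    rw [h1, evenSeq_sum]
    have h2 : p.filter (fun x => x % 2 = 1) = p.filter (fun x => ¬ x % 2 = 0) := by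
      apply Multiset.filter_congr
      intro x _
      omega
    rw [h2, ← Multiset.sum_add, Multiset.filter_add_not, hsum]
  · intro x hx
    rw [bCollapse, Multiset.mem_add] at hx
    rcases hx with hx | hx
    · exact (Multiset.mem_filter.1 hx).2
    · have := (Multiset.mem_filter.1 hx).2
      omega
  · intro x _ hx
    rw [Nat.even_iff] at hx ⊢
    rw [bCollapse, Multiset.count_add]
    have hB : (p.filter (fun x => x % 2 = 1)).count x = 0 := by
      rw [Multiset.count_eq_zero]
      intro hmem
      have := (Multiset.mem_filter.1 hmem).2
      omega
    rw [hB, Multiset.count_filter]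
    split
    · rw [Multiset.coe_count]
      have := count_starOp_even (evenSeq p) (evenSeq_sorted p) (evenSeq_even p)
        (evenSeq_length p) x hx
      omega
    · simp
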